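/- Let p_β(t,x,y) = (1/√(2πt))exp(-(x-y)²/(2t)) + β·sgn(y)·(1/√(2πt))exp(-(|x|+|y|)²/(2t)) be the transition density of the skew Brownian motion with parameter β ∈ [-1,1]. Then for every β, p_β satisfies the Chapman–Kolmogorov equation: ∫_ℝ p_β(s,x,z) p_β(t,z,y) dz = p_β(s+t,x,y) for all s,t > 0 and x,y ∈ ℝ. -/

import Mathlib

open MeasureTheory Set

/-- Transition density of the skew Brownian motion with parameter `β`. -/
noncomputable def skewDensity (β t x y : ℝ) : ℝ :=
  (1 / Real.sqrt (2 * Real.pi * t)) * Real.exp (-(x - y) ^ 2 / (2 * t))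
    + β * Real.sign y * ((1 / Real.sqrt (2 * Real.pi * t)) * Real.exp (-(|x| + |y|) ^ 2 / (2 * t)))

/-- Gaussian kernel. -/
noncomputable def skewG (t u : ℝ) : ℝ :=
  (1 / Real.sqrt (2 * Real.pi * t)) * Real.exp (-u ^ 2 / (2 * t))

lemma skewG_congr {t u v : ℝ} (h : u ^ 2 = v ^ 2) : skewG t u = skewG t v := by
  unfold skewG; rw [h]

lemma skewG_nonneg (t u : ℝ) : 0 ≤ skewG t u := by
  unfold skewG; positivity

lemma skewG_le {t : ℝ} (ht : 0 < t) (u : ℝ) :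
    skewG t u ≤ 1 / Real.sqrt (2 * Real.pi * t) := by
  unfold skewG
  have h1 : Real.exp (-u ^ 2 / (2 * t)) ≤ 1 := by
    rw [Real.exp_le_one_iff]
    have : (0:ℝ) ≤ u ^ 2 / (2 * t) := by positivity
    rw [neg_div]; linarith
  have h0 : (0:ℝ) ≤ 1 / Real.sqrt (2 * Real.pi * t) := by positivity
  calc 1 / Real.sqrt (2 * Real.pi * t) * Real.exp (-u ^ 2 / (2 * t))
      ≤ 1 / Real.sqrt (2 * Real.pi * t) * 1 := by
        exact mul_le_mul_of_nonneg_left h1 h0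
    _ = 1 / Real.sqrt (2 * Real.pi * t) := mul_one _

lemma skewG_abs_le {t b : ℝ} (ht : 0 < t) (hb : 0 ≤ b) (z : ℝ) :
    skewG t (b + |z|) ≤ skewG t z := by
  unfold skewG
  have h : z ^ 2 ≤ (b + |z|) ^ 2 := by
    nlinarith [abs_nonneg z, sq_abs z]
  have h2 : Real.exp (-(b + |z|) ^ 2 / (2 * t)) ≤ Real.exp (-z ^ 2 / (2 * t)) := by
    apply Real.exp_le_exp.mpr
    apply div_le_div_of_nonneg_right ?_ (by positivity)
    · linarith
  exact mul_le_mul_of_nonneg_left h2 (by positivity)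

lemma continuous_skewG (t : ℝ) : Continuous (skewG t) := by
  unfold skewG
  fun_prop

lemma integrable_skewG0 {t : ℝ} (ht : 0 < t) : Integrable (fun z : ℝ => skewG t z) := by
  have h : (fun z : ℝ => skewG t z)
      = fun z : ℝ => (1 / Real.sqrt (2 * Real.pi * t)) * Real.exp (-(1/(2*t)) * z ^ 2) := by
    funext z
    unfold skewG
    rw [show -z ^ 2 / (2 * t) = -(1/(2*t)) * z ^ 2 by ring]
  rw [h]
  exact (integrable_exp_neg_mul_sq (by positivity)).const_mul _

lemma integrable_skewG {t : ℝ} (ht : 0 < t) (c : ℝ) :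
    Integrable (fun z : ℝ => skewG t (z - c)) :=
  (integrable_skewG0 ht).comp_sub_right c

lemma measurable_realSign : Measurable (Real.sign : ℝ → ℝ) := by
  have h : (Real.sign : ℝ → ℝ)
      = fun r => if r < 0 then (-1:ℝ) else if 0 < r then 1 else 0 := rfl
  rw [h]
  refine Measurable.ite ?_ measurable_const
    (Measurable.ite ?_ measurable_const measurable_const)
  · exact measurableSet_Iio
  · exact measurableSet_Ioi

lemma abs_realSign_le (y : ℝ) : |Real.sign y| ≤ 1 := by
  rcases lt_trichotomy y 0 with h | rfl | h
  · rw [Real.sign_of_neg h]; norm_num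
  · rw [Real.sign_zero]; norm_num
  · rw [Real.sign_of_pos h]; norm_num

/-- Chapman–Kolmogorov for the Gaussian kernel. -/
lemma skewG_conv {s t : ℝ} (hs : 0 < s) (ht : 0 < t) (c : ℝ) :
    ∫ w : ℝ, skewG s (c - w) * skewG t w = skewG (s + t) c := by
  have hπ : 0 < Real.pi := Real.pi_pos
  have hst : 0 < s + t := by linarith
  set k : ℝ := (s + t) / (2 * s * t) with hk
  have hkpos : 0 < k := by positivity
  set m : ℝ := t * c / (s + t) with hm
  have key : ∀ w : ℝ, skewG s (c - w) * skewG t w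
      = ((1 / Real.sqrt (2 * Real.pi * s)) * (1 / Real.sqrt (2 * Real.pi * t))
          * Real.exp (-c ^ 2 / (2 * (s + t)))) * Real.exp (-k * (w - m) ^ 2) := by
    intro w
    have hexp : (-(c - w) ^ 2 / (2 * s)) + (-w ^ 2 / (2 * t))
        = -c ^ 2 / (2 * (s + t)) + (-k * (w - m) ^ 2) := by
      rw [hk, hm]
      field_simp
      ring
    unfold skewG
    rw [show (1 / Real.sqrt (2 * Real.pi * s) * Real.exp (-(c - w) ^ 2 / (2 * s)))
          * (1 / Real.sqrt (2 * Real.pi * t) * Real.exp (-w ^ 2 / (2 * t)))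
        = (1 / Real.sqrt (2 * Real.pi * s)) * (1 / Real.sqrt (2 * Real.pi * t))
          * (Real.exp (-(c - w) ^ 2 / (2 * s)) * Real.exp (-w ^ 2 / (2 * t))) by ring,
      ← Real.exp_add, hexp, Real.exp_add]
    ring
  calc (∫ w : ℝ, skewG s (c - w) * skewG t w)
      = ∫ w : ℝ, ((1 / Real.sqrt (2 * Real.pi * s)) * (1 / Real.sqrt (2 * Real.pi * t))
          * Real.exp (-c ^ 2 / (2 * (s + t)))) * Real.exp (-k * (w - m) ^ 2) := by
        simp only [key]
    _ = ((1 / Real.sqrt (2 * Real.pi * s)) * (1 / Real.sqrt (2 * Real.pi * t))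
          * Real.exp (-c ^ 2 / (2 * (s + t)))) * ∫ w : ℝ, Real.exp (-k * (w - m) ^ 2) :=
        MeasureTheory.integral_const_mul _ _
    _ = ((1 / Real.sqrt (2 * Real.pi * s)) * (1 / Real.sqrt (2 * Real.pi * t))
          * Real.exp (-c ^ 2 / (2 * (s + t)))) * Real.sqrt (Real.pi / k) := by
        rw [integral_sub_right_eq_self (fun w => Real.exp (-k * w ^ 2)) m,
          integral_gaussian]
    _ = skewG (s + t) c := by
        unfold skewG
        rw [show (1 / Real.sqrt (2 * Real.pi * s)) * (1 / Real.sqrt (2 * Real.pi * t))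
              * Real.exp (-c ^ 2 / (2 * (s + t))) * Real.sqrt (Real.pi / k)
            = ((1 / Real.sqrt (2 * Real.pi * s)) * (1 / Real.sqrt (2 * Real.pi * t))
              * Real.sqrt (Real.pi / k)) * Real.exp (-c ^ 2 / (2 * (s + t))) by ring]
        congr 1
        rw [one_div, one_div, one_div, ← Real.sqrt_inv, ← Real.sqrt_inv, ← Real.sqrt_inv,
          ← Real.sqrt_mul (by positivity), ← Real.sqrt_mul (by positivity)]
        congr 1
        rw [hk]
        field_simp


noncomputable def skF2 (β s t x y z : ℝ) : ℝ :=
  β * Real.sign y * (skewG s (x - z) * skewG t (|z| + |y|))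

noncomputable def skF3 (β s t x y z : ℝ) : ℝ :=
  β * Real.sign z * (skewG s (|x| + |z|) * skewG t (z - y))

noncomputable def skF4 (β s t x y z : ℝ) : ℝ :=
  (β * Real.sign z) * ((β * Real.sign y) * (skewG s (|x| + |z|) * skewG t (|z| + |y|)))

lemma abs_mul_le_one {β r : ℝ} (hβ : |β| ≤ 1) (hr : |r| ≤ 1) : |β * r| ≤ 1 := by
  rw [abs_mul]
  nlinarith [abs_nonneg β, abs_nonneg r]

lemma skF2_int {β s t x y : ℝ} (hβ : |β| ≤ 1) (hs : 0 < s) (ht : 0 < t) :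
    Integrable (skF2 β s t x y) := by
  apply Integrable.mono' ((integrable_skewG0 ht).const_mul (1 / Real.sqrt (2 * Real.pi * s)))
  · unfold skF2
    exact (continuous_const.mul
      (((continuous_skewG s).comp (continuous_const.sub continuous_id)).mul
        ((continuous_skewG t).comp (continuous_abs.add continuous_const)))).aestronglyMeasurable
  · filter_upwards with z
    unfold skF2
    rw [Real.norm_eq_abs, abs_mul]
    have h1 : |β * Real.sign y| ≤ 1 := abs_mul_le_one hβ (abs_realSign_le y)
    have h2 : |skewG s (x - z) * skewG t (|z| + |y|)|
        ≤ 1 / Real.sqrt (2 * Real.pi * s) * skewG t z := by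
      rw [abs_of_nonneg (mul_nonneg (skewG_nonneg _ _) (skewG_nonneg _ _))]
      apply mul_le_mul (skewG_le hs _) ?_ (skewG_nonneg _ _) (by positivity)
      rw [add_comm]
      exact skewG_abs_le ht (abs_nonneg y) z
    calc |β * Real.sign y| * |skewG s (x - z) * skewG t (|z| + |y|)|
        ≤ 1 * (1 / Real.sqrt (2 * Real.pi * s) * skewG t z) :=
          mul_le_mul h1 h2 (abs_nonneg _) zero_le_one
      _ = 1 / Real.sqrt (2 * Real.pi * s) * skewG t z := one_mul _

lemma skF3_int {β s t x y : ℝ} (hβ : |β| ≤ 1) (hs : 0 < s) (ht : 0 < t) :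
    Integrable (skF3 β s t x y) := by
  apply Integrable.mono' ((integrable_skewG0 hs).const_mul (1 / Real.sqrt (2 * Real.pi * t)))
  · unfold skF3
    exact ((measurable_const.mul measurable_realSign).mul
      (((continuous_skewG s).measurable.comp (measurable_const.add measurable_abs)).mul
        ((continuous_skewG t).measurable.comp
          (measurable_id.sub measurable_const)))).aestronglyMeasurable
  · filter_upwards with z
    unfold skF3
    rw [Real.norm_eq_abs, abs_mul]
    have h1 : |β * Real.sign z| ≤ 1 := abs_mul_le_one hβ (abs_realSign_le z)
    have h2 : |skewG s (|x| + |z|) * skewG t (z - y)|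
        ≤ 1 / Real.sqrt (2 * Real.pi * t) * skewG s z := by
      rw [abs_of_nonneg (mul_nonneg (skewG_nonneg _ _) (skewG_nonneg _ _)), mul_comm]
      exact mul_le_mul (skewG_le ht _) (skewG_abs_le hs (abs_nonneg x) z)
        (skewG_nonneg _ _) (by positivity)
    calc |β * Real.sign z| * |skewG s (|x| + |z|) * skewG t (z - y)|
        ≤ 1 * (1 / Real.sqrt (2 * Real.pi * t) * skewG s z) :=
          mul_le_mul h1 h2 (abs_nonneg _) zero_le_one
      _ = 1 / Real.sqrt (2 * Real.pi * t) * skewG s z := one_mul _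

lemma skF4_int {β s t x y : ℝ} (hβ : |β| ≤ 1) (hs : 0 < s) (ht : 0 < t) :
    Integrable (skF4 β s t x y) := by
  apply Integrable.mono' ((integrable_skewG0 hs).const_mul (1 / Real.sqrt (2 * Real.pi * t)))
  · unfold skF4
    exact ((measurable_const.mul measurable_realSign).mul (measurable_const.mul
      (((continuous_skewG s).measurable.comp (measurable_const.add measurable_abs)).mul
        ((continuous_skewG t).measurable.comp
          (measurable_abs.add measurable_const))))).aestronglyMeasurable
  · filter_upwards with z
    unfold skF4
    rw [Real.norm_eq_abs, abs_mul (β * Real.sign z), abs_mul (β * Real.sign y)]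
    have h1 : |β * Real.sign z| ≤ 1 := abs_mul_le_one hβ (abs_realSign_le z)
    have h1' : |β * Real.sign y| ≤ 1 := abs_mul_le_one hβ (abs_realSign_le y)
    have h2 : |skewG s (|x| + |z|) * skewG t (|z| + |y|)|
        ≤ 1 / Real.sqrt (2 * Real.pi * t) * skewG s z := by
      rw [abs_of_nonneg (mul_nonneg (skewG_nonneg _ _) (skewG_nonneg _ _)), mul_comm]
      exact mul_le_mul (skewG_le ht _) (skewG_abs_le hs (abs_nonneg x) z)
        (skewG_nonneg _ _) (by positivity)
    calc |β * Real.sign z| * (|β * Real.sign y| * |skewG s (|x| + |z|) * skewG t (|z| + |y|)|)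
        ≤ 1 * (1 * (1 / Real.sqrt (2 * Real.pi * t) * skewG s z)) := by
          apply mul_le_mul h1 ?_ (by positivity) zero_le_one
          exact mul_le_mul h1' h2 (abs_nonneg _) zero_le_one
      _ = 1 / Real.sqrt (2 * Real.pi * t) * skewG s z := by ring

lemma skF_key {β s t x y : ℝ} (z : ℝ) :
    skF2 β s t x y z + skF3 β s t x y z + (skF2 β s t x y (-z) + skF3 β s t x y (-z))
      = β * Real.sign y * (skewG s (|x| - z) * skewG t (z + |y|)
          + skewG s (|x| + z) * skewG t (z - |y|)) := by
  have hx' : ∀ u : ℝ, skewG s (x - u) + skewG s (x + u)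
      = skewG s (|x| - u) + skewG s (|x| + u) := by
    intro u
    rcases abs_cases x with ⟨h, _⟩ | ⟨h, _⟩
    · rw [h]
    · rw [h, show skewG s (x - u) = skewG s (-x + u) from skewG_congr (by ring),
        show skewG s (x + u) = skewG s (-x - u) from skewG_congr (by ring)]
      ring
  have hy' : ∀ u : ℝ, skewG t (u - y) - skewG t (u + y)
      = Real.sign y * (skewG t (u - |y|) - skewG t (u + |y|)) := by
    intro u
    rcases lt_trichotomy y 0 with h | h | h
    · rw [Real.sign_of_neg h, abs_of_neg h, show u - -y = u + y by ring,
        show u + -y = u - y by ring]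
      ring
    · subst h
      simp
    · rw [Real.sign_of_pos h, abs_of_pos h]
      ring
  unfold skF2 skF3
  simp only [abs_neg, Real.sign_neg]
  rw [show skewG t (-z - y) = skewG t (z + y) from skewG_congr (by ring),
    show x - -z = x + z by ring]
  rcases lt_trichotomy z 0 with hz | rfl | hz
  · rw [abs_of_neg hz, Real.sign_of_neg hz,
      show skewG t (-z + |y|) = skewG t (z - |y|) from skewG_congr (by ring),
      show |x| + -z = |x| - z by ring]
    linear_combination (β * Real.sign y * skewG t (z - |y|)) * hx' z
      - (β * skewG s (|x| - z)) * hy' z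
  · have h0 := hx' 0
    simp only [sub_zero, add_zero] at h0
    simp only [abs_zero, Real.sign_zero, sub_zero, add_zero, zero_add, zero_sub,
      mul_zero, zero_mul, neg_zero]
    rw [show skewG t (-|y|) = skewG t |y| from skewG_congr (by ring)]
    linear_combination (β * Real.sign y * skewG t |y|) * h0
  · rw [abs_of_pos hz, Real.sign_of_pos hz]
    linear_combination (β * Real.sign y * skewG t (z + |y|)) * hx' z
      + (β * skewG s (|x| + z)) * hy' z

/-- Chapman–Kolmogorov equation for the skew Brownian motion density:
`∫_ℝ p_β(s,x,z) p_β(t,z,y) dz = p_β(s+t,x,y)` for all `s, t > 0`. -/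
theorem skewDensity_chapman_kolmogorov (β : ℝ) (hβ : β ∈ Set.Icc (-1 : ℝ) 1)
    (s t : ℝ) (hs : 0 < s) (ht : 0 < t) (x y : ℝ) :
    (∫ z : ℝ, skewDensity β s x z * skewDensity β t z y) = skewDensity β (s + t) x y := by
  have hβ1 : |β| ≤ 1 := abs_le.mpr ⟨hβ.1, hβ.2⟩
  have hi1 : Integrable (fun z : ℝ => skewG s (x - z) * skewG t (z - y)) := by
    apply Integrable.mono' ((integrable_skewG ht y).const_mul (1 / Real.sqrt (2 * Real.pi * s)))
    · exact (((continuous_skewG s).comp (continuous_const.sub continuous_id)).mul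
        ((continuous_skewG t).comp (continuous_id.sub continuous_const))).aestronglyMeasurable
    · filter_upwards with z
      rw [Real.norm_eq_abs, abs_of_nonneg (mul_nonneg (skewG_nonneg _ _) (skewG_nonneg _ _))]
      exact mul_le_mul_of_nonneg_right (skewG_le hs _) (skewG_nonneg _ _)
  have hi2 := skF2_int (x := x) (y := y) hβ1 hs ht
  have hi3 := skF3_int (x := x) (y := y) hβ1 hs ht
  have hi4 := skF4_int (x := x) (y := y) hβ1 hs ht
  have hi23 : Integrable (fun z : ℝ => skF2 β s t x y z + skF3 β s t x y z) := hi2.add hi3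
  have hi234 : Integrable (fun z : ℝ => (skF2 β s t x y z + skF3 β s t x y z)
      + skF4 β s t x y z) := hi23.add hi4
  have hexp : (fun z : ℝ => skewDensity β s x z * skewDensity β t z y)
      = fun z => skewG s (x - z) * skewG t (z - y)
          + ((skF2 β s t x y z + skF3 β s t x y z) + skF4 β s t x y z) := by
    funext z
    unfold skewDensity skF2 skF3 skF4 skewG
    ring
  rw [hexp, integral_add hi1 hi234, integral_add hi23 hi4]
  have e1 : (∫ z : ℝ, skewG s (x - z) * skewG t (z - y)) = skewG (s + t) (x - y) := by
    calc (∫ z : ℝ, skewG s (x - z) * skewG t (z - y))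
        = ∫ z : ℝ, (fun w => skewG s ((x - y) - w) * skewG t w) (z - y) := by
          congr 1
          funext z
          simp only
          rw [show x - y - (z - y) = x - z by ring]
      _ = ∫ w : ℝ, skewG s ((x - y) - w) * skewG t w :=
          integral_sub_right_eq_self (fun w : ℝ => skewG s ((x - y) - w) * skewG t w) y
      _ = skewG (s + t) (x - y) := skewG_conv hs ht _
  have e4 : (∫ z : ℝ, skF4 β s t x y z) = 0 := by
    have hni : ∀ z : ℝ, skF4 β s t x y (-z) = - skF4 β s t x y z := by
      intro z
      unfold skF4
      rw [Real.sign_neg, abs_neg]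
      ring
    have h := integral_neg_eq_self (skF4 β s t x y) volume
    simp only [hni] at h
    rw [integral_neg] at h
    linarith
  have hiA : Integrable (fun z : ℝ => skewG s (|x| - z) * skewG t (z + |y|)) := by
    have h' : (fun z : ℝ => skewG t (z + |y|)) = fun z : ℝ => skewG t (z - (-|y|)) := by
      funext z
      rw [sub_neg_eq_add]
    apply Integrable.mono' ((integrable_skewG ht (-|y|)).const_mul
      (1 / Real.sqrt (2 * Real.pi * s)))
    · exact (((continuous_skewG s).comp (continuous_const.sub continuous_id)).mul
        ((continuous_skewG t).comp (continuous_id.add continuous_const))).aestronglyMeasurable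
    · filter_upwards with z
      rw [Real.norm_eq_abs, abs_of_nonneg (mul_nonneg (skewG_nonneg _ _) (skewG_nonneg _ _)),
        sub_neg_eq_add]
      exact mul_le_mul_of_nonneg_right (skewG_le hs _) (skewG_nonneg _ _)
  have hiB : Integrable (fun z : ℝ => skewG s (|x| + z) * skewG t (z - |y|)) := by
    apply Integrable.mono' ((integrable_skewG ht |y|).const_mul
      (1 / Real.sqrt (2 * Real.pi * s)))
    · exact (((continuous_skewG s).comp (continuous_const.add continuous_id)).mul
        ((continuous_skewG t).comp (continuous_id.sub continuous_const))).aestronglyMeasurable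
    · filter_upwards with z
      rw [Real.norm_eq_abs, abs_of_nonneg (mul_nonneg (skewG_nonneg _ _) (skewG_nonneg _ _))]
      exact mul_le_mul_of_nonneg_right (skewG_le hs _) (skewG_nonneg _ _)
  have hA : (∫ z : ℝ, skewG s (|x| - z) * skewG t (z + |y|)) = skewG (s + t) (|x| + |y|) := by
    calc (∫ z : ℝ, skewG s (|x| - z) * skewG t (z + |y|))
        = ∫ z : ℝ, (fun w => skewG s ((|x| + |y|) - w) * skewG t w) (z + |y|) := by
          congr 1
          funext z
          simp only
          rw [show |x| + |y| - (z + |y|) = |x| - z by ring]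
      _ = ∫ w : ℝ, skewG s ((|x| + |y|) - w) * skewG t w :=
          integral_add_right_eq_self (fun w : ℝ => skewG s ((|x| + |y|) - w) * skewG t w) |y|
      _ = skewG (s + t) (|x| + |y|) := skewG_conv hs ht _
  have hB : (∫ z : ℝ, skewG s (|x| + z) * skewG t (z - |y|)) = skewG (s + t) (|x| + |y|) := by
    calc (∫ z : ℝ, skewG s (|x| + z) * skewG t (z - |y|))
        = ∫ z : ℝ, skewG s (|x| - z) * skewG t (z + |y|) := by
          rw [← integral_neg_eq_self (fun z : ℝ => skewG s (|x| + z) * skewG t (z - |y|)) volume]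
          congr 1
          funext z
          rw [show |x| + -z = |x| - z by ring,
            show skewG t (-z - |y|) = skewG t (z + |y|) from skewG_congr (by ring)]
      _ = skewG (s + t) (|x| + |y|) := hA
  have e23 : (∫ z : ℝ, (skF2 β s t x y z + skF3 β s t x y z))
      = β * Real.sign y * skewG (s + t) (|x| + |y|) := by
    have hrefl : Integrable (fun z : ℝ => skF2 β s t x y (-z) + skF3 β s t x y (-z)) :=
      hi23.comp_neg
    have hdouble : (2:ℝ) * ∫ z : ℝ, (skF2 β s t x y z + skF3 β s t x y z)
        = ∫ z : ℝ, ((skF2 β s t x y z + skF3 β s t x y z)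
            + (skF2 β s t x y (-z) + skF3 β s t x y (-z))) := by
      rw [integral_add hi23 hrefl,
        integral_neg_eq_self (fun z : ℝ => skF2 β s t x y z + skF3 β s t x y z) volume]
      ring
    have hsum : (∫ z : ℝ, ((skF2 β s t x y z + skF3 β s t x y z)
        + (skF2 β s t x y (-z) + skF3 β s t x y (-z))))
        = β * Real.sign y
            * (skewG (s + t) (|x| + |y|) + skewG (s + t) (|x| + |y|)) := by
      calc (∫ z : ℝ, ((skF2 β s t x y z + skF3 β s t x y z)
            + (skF2 β s t x y (-z) + skF3 β s t x y (-z))))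
          = ∫ z : ℝ, β * Real.sign y * (skewG s (|x| - z) * skewG t (z + |y|)
              + skewG s (|x| + z) * skewG t (z - |y|)) := by
            congr 1
            funext z
            exact skF_key z
        _ = β * Real.sign y * ∫ z : ℝ, (skewG s (|x| - z) * skewG t (z + |y|)
              + skewG s (|x| + z) * skewG t (z - |y|)) :=
            MeasureTheory.integral_const_mul _ _
        _ = β * Real.sign y
            * (skewG (s + t) (|x| + |y|) + skewG (s + t) (|x| + |y|)) := by
            rw [integral_add hiA hiB, hA, hB]
    rw [hsum] at hdouble
    linear_combination hdouble / 2
  rw [e1, e23, e4]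
  unfold skewDensity skewG
  ring
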